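/- Let n ≥ 3 and t > 0. Then ∫_{{ξ ∈ ℝⁿ : |ξ₁| ≤ |ξ'|}} e^{−(ξ₁²/|ξ'|²) t} · 1/(|ξ'|^{n−1}(1+|ξ'|²)) dξ ≤ C t^{−1/2}, where ξ' = (ξ₂,…,ξₙ) and C depends only on n. -/

import Mathlib

open MeasureTheory

open Set Metric Real
open scoped ENNReal

lemma stmt15_lintegral_fun_norm (m : ℕ) (hm : 0 < m) (f : ℝ → ℝ≥0∞) (hf : Measurable f) :
    ∫⁻ x : EuclideanSpace ℝ (Fin m), f ‖x‖ =
      (volume : Measure (EuclideanSpace ℝ (Fin m))).toSphere univ *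
        ∫⁻ y in Ioi (0 : ℝ), ENNReal.ofReal (y ^ (m - 1)) * f y := by
  set E := EuclideanSpace ℝ (Fin m) with hE
  have hdim : Module.finrank ℝ E = m := finrank_euclideanSpace_fin
  haveI : Nontrivial E := Module.nontrivial_of_finrank_pos (R := ℝ) (hdim.symm ▸ hm)
  have h1 : ∫⁻ x : E, f ‖x‖
      = ∫⁻ x : ({0}ᶜ : Set E), f ‖x.1‖ ∂((volume : Measure E).comap (↑)) := by
    have := lintegral_subtype_comap (μ := (volume : Measure E))
      (measurableSet_singleton (0 : E)).compl (fun x => f ‖x‖)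
    rw [restrict_compl_singleton] at this
    exact this.symm
  have h2 : ∫⁻ x : ({0}ᶜ : Set E), f ‖x.1‖ ∂((volume : Measure E).comap (↑))
      = ∫⁻ p : sphere (0 : E) 1 × Ioi (0 : ℝ), f p.2
          ∂((volume : Measure E).toSphere.prod
              (.volumeIoiPow (Module.finrank ℝ E - 1))) := by
    have := (Measure.measurePreserving_homeomorphUnitSphereProd
        (volume : Measure E)).lintegral_comp_emb
      (Homeomorph.measurableEmbedding _) (fun p => f p.2)
    simp only [homeomorphUnitSphereProd_apply_snd_coe] at this
    exact this
  have hmeas2 : Measurable (fun p : ↑(sphere (0 : E) 1) × ↑(Ioi (0 : ℝ)) => f ↑p.2) :=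
    hf.comp (measurable_subtype_coe.comp measurable_snd)
  have hmeas3 : Measurable (fun y : ↑(Ioi (0 : ℝ)) => f ↑y) :=
    hf.comp measurable_subtype_coe
  have h3 : ∫⁻ p : sphere (0 : E) 1 × Ioi (0 : ℝ), f p.2
          ∂((volume : Measure E).toSphere.prod
              (.volumeIoiPow (Module.finrank ℝ E - 1)))
      = (volume : Measure E).toSphere univ *
          ∫⁻ y : Ioi (0 : ℝ), f y ∂(Measure.volumeIoiPow (m - 1)) := by
    rw [hdim, lintegral_prod_symm'
      (fun p : ↑(sphere (0 : E) 1) × ↑(Ioi (0 : ℝ)) => f ↑p.2) hmeas2]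
    simp only [lintegral_const]
    rw [lintegral_mul_const'' _ hmeas3.aemeasurable, mul_comm]
  have h4 : ∫⁻ y : Ioi (0 : ℝ), f y ∂(Measure.volumeIoiPow (m - 1))
      = ∫⁻ y in Ioi (0 : ℝ), ENNReal.ofReal (y ^ (m - 1)) * f y := by
    rw [Measure.volumeIoiPow,
      lintegral_withDensity_eq_lintegral_mul _
        ((measurable_subtype_coe.pow_const _).ennreal_ofReal) hmeas3]
    simp only [Pi.mul_apply]
    exact lintegral_subtype_comap measurableSet_Ioi
      (fun y => ENNReal.ofReal (y ^ (m - 1)) * f y)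
  rw [h1, h2, h3, h4]

lemma stmt15_g_meas (n : ℕ) :
    Measurable (fun r : ℝ => ENNReal.ofReal (r / (r ^ (n - 1) * (1 + r ^ 2)))) :=
  (measurable_id.div ((measurable_id.pow_const _).mul
    (measurable_const.add (measurable_id.pow_const 2)))).ennreal_ofReal

lemma stmt15_K_lt_top (n : ℕ) (hn : 3 ≤ n) :
    ∫⁻ y : EuclideanSpace ℝ (Fin (n - 1)),
      ENNReal.ofReal (‖y‖ / (‖y‖ ^ (n - 1) * (1 + ‖y‖ ^ 2))) < ⊤ := by
  rw [stmt15_lintegral_fun_norm (n - 1) (by omega) _ (stmt15_g_meas n)]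
  refine ENNReal.mul_lt_top (measure_lt_top _ _) ?_
  have heq : ∫⁻ y in Ioi (0 : ℝ),
        ENNReal.ofReal (y ^ (n - 1 - 1)) *
          ENNReal.ofReal (y / (y ^ (n - 1) * (1 + y ^ 2)))
      = ∫⁻ y in Ioi (0 : ℝ), ENNReal.ofReal ((1 + y ^ 2)⁻¹) := by
    refine setLIntegral_congr_fun measurableSet_Ioi (fun y hy => ?_)
    have hy0 : (0 : ℝ) < y := hy
    rw [← ENNReal.ofReal_mul (by positivity)]
    congr 1
    have h1 : y ^ (n - 1 - 1) * y = y ^ (n - 1) := by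
      rw [← pow_succ]; congr 1; omega
    rw [mul_div_assoc', h1, ← div_div, div_self (pow_ne_zero _ hy0.ne'), one_div]
  rw [heq]
  calc ∫⁻ y in Ioi (0 : ℝ), ENNReal.ofReal ((1 + y ^ 2)⁻¹)
      ≤ ∫⁻ y, ENNReal.ofReal ((1 + y ^ 2)⁻¹) := setLIntegral_le_lintegral _ _
    _ < ⊤ := integrable_inv_one_add_sq.lintegral_lt_top

/-- for `n ≥ 3`, writing `ξ = (ξ₁, ξ') ∈ ℝ × ℝ^{n-1}`,
`∫_{|ξ₁| ≤ |ξ'|} e^{-(ξ₁²/|ξ'|²)t} / (|ξ'|^{n-1}(1+|ξ'|²)) dξ ≤ C t^{-1/2}`. -/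
theorem stmt15 (n : ℕ) (hn : 3 ≤ n) :
    ∃ C : ℝ, 0 < C ∧ ∀ t : ℝ, 0 < t →
      ∫ ξ in {ξ : ℝ × EuclideanSpace ℝ (Fin (n - 1)) | |ξ.1| ≤ ‖ξ.2‖},
          Real.exp (-(ξ.1 ^ 2 / ‖ξ.2‖ ^ 2) * t) / (‖ξ.2‖ ^ (n - 1) * (1 + ‖ξ.2‖ ^ 2))
        ≤ C * t ^ (-(1 : ℝ) / 2) := by
  set X := EuclideanSpace ℝ (Fin (n - 1)) with hX
  set K : ℝ≥0∞ := ∫⁻ y : X, ENNReal.ofReal (‖y‖ / (‖y‖ ^ (n - 1) * (1 + ‖y‖ ^ 2))) with hK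
  have hKlt : K < ⊤ := stmt15_K_lt_top n hn
  have hKnn : 0 ≤ K.toReal := ENNReal.toReal_nonneg
  refine ⟨√π * K.toReal + 1, by positivity, fun t ht => ?_⟩
  set E : Set (ℝ × X) := {ξ | |ξ.1| ≤ ‖ξ.2‖} with hEdef
  have hE : MeasurableSet E := measurableSet_le measurable_fst.abs measurable_snd.norm
  set f : ℝ × X → ℝ := fun ξ =>
    Real.exp (-(ξ.1 ^ 2 / ‖ξ.2‖ ^ 2) * t) / (‖ξ.2‖ ^ (n - 1) * (1 + ‖ξ.2‖ ^ 2)) with hfdef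
  have hf_meas : Measurable f := by
    apply Measurable.div
    · exact (((measurable_fst.pow_const 2).div
        (measurable_snd.norm.pow_const 2)).neg.mul_const t).exp
    · exact (measurable_snd.norm.pow_const _).mul
        (measurable_const.add (measurable_snd.norm.pow_const 2))
  have hf_nonneg : ∀ ξ, 0 ≤ f ξ := fun ξ => div_nonneg (exp_pos _).le (by positivity)
  rw [integral_eq_lintegral_of_nonneg_ae (ae_of_all _ hf_nonneg)
    hf_meas.aestronglyMeasurable.restrict]
  refine ENNReal.toReal_le_of_le_ofReal (by positivity) ?_
  -- inner bound
  have inner : ∀ y : X, ∫⁻ x : ℝ, E.indicator (fun ξ => ENNReal.ofReal (f ξ)) (x, y)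
      ≤ ENNReal.ofReal (√π / √t) *
        ENNReal.ofReal (‖y‖ / (‖y‖ ^ (n - 1) * (1 + ‖y‖ ^ 2))) := by
    intro y
    have step1 : ∫⁻ x : ℝ, E.indicator (fun ξ => ENNReal.ofReal (f ξ)) (x, y)
        ≤ ∫⁻ x : ℝ, ENNReal.ofReal (f (x, y)) :=
      lintegral_mono fun x => Set.indicator_le_self _ _ _
    rcases eq_or_lt_of_le (norm_nonneg y) with h0 | hr
    · have hz : ∀ x : ℝ, f (x, y) = 0 := by
        intro x
        have : ‖y‖ ^ (n - 1) = 0 := by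
          rw [← h0]; exact zero_pow (by omega)
        simp [hfdef, this]
      refine le_trans step1 ?_
      simp [hz]
    · set r : ℝ := ‖y‖ with hrdef
      set D : ℝ := r ^ (n - 1) * (1 + r ^ 2) with hDdef
      have hD : 0 < D := by positivity
      have hb : 0 < t / r ^ 2 := div_pos ht (by positivity)
      have key : ∫⁻ x : ℝ, ENNReal.ofReal (f (x, y))
          = ENNReal.ofReal (√(π / (t / r ^ 2))) * ENNReal.ofReal (1 / D) := by
        have hfx : ∀ x : ℝ, f (x, y) = Real.exp (-(t / r ^ 2) * x ^ 2) * (1 / D) := by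
          intro x
          rw [hfdef]
          simp only
          rw [div_eq_mul_one_div]
          congr 2
          rw [← hrdef]
          field_simp
        simp_rw [hfx, ENNReal.ofReal_mul (exp_pos _).le]
        rw [lintegral_mul_const' _ _ ENNReal.ofReal_ne_top,
          ← ofReal_integral_eq_lintegral_ofReal (integrable_exp_neg_mul_sq hb)
            (ae_of_all _ fun x => (exp_pos _).le),
          integral_gaussian]
      have hval : √(π / (t / r ^ 2)) * (1 / D) = √π / √t * (r / D) := by
        have h1 : π / (t / r ^ 2) = π * r ^ 2 / t := by field_simp
        rw [h1, sqrt_div (by positivity) t, sqrt_mul pi_pos.le, sqrt_sq hr.le]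
        ring
      refine step1.trans ?_
      rw [key, ← ENNReal.ofReal_mul (sqrt_nonneg _), hval,
        ENNReal.ofReal_mul (by positivity)]
  -- assemble
  calc ∫⁻ ξ in E, ENNReal.ofReal (f ξ)
      = ∫⁻ y : X, ∫⁻ x : ℝ, E.indicator (fun ξ => ENNReal.ofReal (f ξ)) (x, y) := by
        rw [← lintegral_indicator hE, Measure.volume_eq_prod,
          lintegral_prod_symm' _ (hf_meas.ennreal_ofReal.indicator hE)]
    _ ≤ ∫⁻ y : X, ENNReal.ofReal (√π / √t) *
          ENNReal.ofReal (‖y‖ / (‖y‖ ^ (n - 1) * (1 + ‖y‖ ^ 2))) :=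
        lintegral_mono inner
    _ = ENNReal.ofReal (√π / √t) * K := by
        rw [lintegral_const_mul _
          (show Measurable fun y : X =>
              ENNReal.ofReal (‖y‖ / (‖y‖ ^ (n - 1) * (1 + ‖y‖ ^ 2))) from
            (stmt15_g_meas n).comp measurable_norm)]
    _ ≤ ENNReal.ofReal ((√π * K.toReal + 1) * t ^ (-(1 : ℝ) / 2)) := by
        rw [show ENNReal.ofReal (√π / √t) * K
              = ENNReal.ofReal (√π / √t * K.toReal) from by
            rw [ENNReal.ofReal_mul (by positivity), ENNReal.ofReal_toReal hKlt.ne]]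
        refine ENNReal.ofReal_le_ofReal ?_
        have hrt : t ^ (-(1 : ℝ) / 2) = (√t)⁻¹ := by
          rw [sqrt_eq_rpow, ← rpow_neg ht.le]
          norm_num
        have heq2 : √π / √t * K.toReal = √π * K.toReal * (√t)⁻¹ := by
          rw [div_eq_mul_inv]; ring
        rw [hrt, heq2]
        exact mul_le_mul_of_nonneg_right (le_add_of_nonneg_right zero_le_one)
          (inv_nonneg.mpr (sqrt_nonneg _))
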